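/- For every integer m ≥ 2 and all nonnegative integers a₁, …, a_m, one has Υ_m(a₁, …, a_m) > 0. -/

import Mathlib

/-- Binomial coefficient `C(n, j)` for `n : ℕ` and `j : ℤ`, with the convention that
it is zero unless `0 ≤ j ≤ n`, as a rational number. -/
def ichoose (n : ℕ) (j : ℤ) : ℚ := if 0 ≤ j then (n.choose j.toNat : ℚ) else 0

/-- `Υ_{m+1}(a₀, …, a_m) = Σ_{k ∈ ℤ} (−1)^k ∏ᵢ C(2aᵢ, aᵢ + k)`.  Only integers `k`
with `|k| ≤ a₀` can contribute (the factor `i = 0` vanishes otherwise), so the sum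
over all of `ℤ` equals the finite sum over `|k| ≤ a₀`. -/
noncomputable def ups {m : ℕ} (a : Fin (m + 1) → ℕ) : ℚ :=
  ∑ k ∈ Finset.Icc (-(a 0 : ℤ)) (a 0 : ℤ),
    (-1 : ℚ) ^ k * ∏ i, ichoose (2 * a i) ((a i : ℤ) + k)

open Finset

noncomputable def F (a : ℕ) (k : ℤ) : ℚ := ichoose (2 * a) ((a : ℤ) + k)

lemma F_eq_of_nonneg (a : ℕ) (k : ℤ) (h : 0 ≤ (a:ℤ) + k) :
    F a k = ((2*a).choose ((a:ℤ)+k).toNat : ℚ) := by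
  simp [F, ichoose, h]

lemma F_of_lt {a : ℕ} {k : ℤ} (h : (a:ℤ) < |k|) : F a k = 0 := by
  rcases abs_cases k with ⟨hk, _⟩ | ⟨hk, _⟩
  · rw [hk] at h
    rw [F_eq_of_nonneg _ _ (by omega)]
    have : 2 * a < ((a:ℤ)+k).toNat := by omega
    rw [Nat.choose_eq_zero_of_lt this]; norm_num
  · rw [hk] at h
    simp only [F, ichoose, if_neg (by omega : ¬ (0:ℤ) ≤ (a:ℤ)+k)]

lemma F_nat (a k : ℕ) : F a k = ((2*a).choose (a+k) : ℚ) := by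
  rw [F_eq_of_nonneg _ _ (by positivity)]
  have : ((a:ℤ)+(k:ℤ)).toNat = a + k := by omega
  rw [this]

lemma F_neg (a : ℕ) (k : ℤ) : F a (-k) = F a k := by
  rcases le_or_gt (|k|) (a:ℤ) with h | h
  · rcases abs_cases k with ⟨hk, _⟩ | ⟨hk, _⟩
    · -- k ≥ 0
      rw [F_eq_of_nonneg _ _ (by omega), F_eq_of_nonneg _ _ (by omega)]
      norm_cast
      have h1 : ((a:ℤ) + -k).toNat = a - k.toNat := by omega
      have h2 : ((a:ℤ) + k).toNat = a + k.toNat := by omega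
      rw [h1, h2]
      have : a - k.toNat = 2*a - (a + k.toNat) := by omega
      rw [this, Nat.choose_symm (by omega)]
    · rw [F_eq_of_nonneg _ _ (by omega), F_eq_of_nonneg _ _ (by omega)]
      norm_cast
      have h1 : ((a:ℤ) + -k).toNat = a + (-k).toNat := by omega
      have h2 : ((a:ℤ) + k).toNat = a - (-k).toNat := by omega
      rw [h1, h2]
      have : a - (-k).toNat = 2*a - (a + (-k).toNat) := by omega
      rw [this, Nat.choose_symm (by omega)]
  · rw [F_of_lt h, F_of_lt (by rwa [abs_neg])]

lemma neg_one_zpow_sub (j c : ℕ) : (-1:ℚ)^((j:ℤ) - c) = (-1:ℚ)^j * (-1:ℚ)^c := by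
  rw [zpow_sub₀ (by norm_num : (-1:ℚ) ≠ 0), zpow_natCast, zpow_natCast]
  rcases Nat.even_or_odd c with h | h
  · rw [h.neg_one_pow]; ring
  · rw [h.neg_one_pow]; ring

lemma alt_row (c : ℕ) :
    ∑ k ∈ Icc (-(c:ℤ)) (c:ℤ), (-1:ℚ)^k * F c k = if c = 0 then 1 else 0 := by
  have key : ∑ k ∈ Icc (-(c:ℤ)) (c:ℤ), (-1:ℚ)^k * F c k
      = ∑ j ∈ range (2*c+1), (-1:ℚ)^((j:ℤ) - c) * F c ((j:ℤ) - c) := by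
    refine Finset.sum_nbij' (fun (k:ℤ) => (k + c).toNat) (fun (j:ℕ) => (j:ℤ) - c) ?_ ?_ ?_ ?_ ?_
    · intro k hk; simp only [mem_Icc] at hk; simp only [mem_range]; omega
    · intro j hj; simp only [mem_range] at hj; simp only [mem_Icc]; omega
    · intro k hk; simp only [mem_Icc] at hk; omega
    · intro j hj; simp only [mem_range] at hj; omega
    · intro k hk; simp only [mem_Icc] at hk
      congr 1 <;> · congr 1; omega
  rw [key]
  have term : ∀ j ∈ range (2*c+1), (-1:ℚ)^((j:ℤ) - c) * F c ((j:ℤ) - c)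
      = (-1:ℚ)^c * (((-1:ℤ)^j * ((2*c).choose j : ℤ) : ℤ) : ℚ) := by
    intro j hj
    simp only [mem_range] at hj
    have hF : F c ((j:ℤ) - c) = ((2*c).choose j : ℚ) := by
      have h0 : (0:ℤ) ≤ (c:ℤ) + ((j:ℤ) - c) := by omega
      rw [F_eq_of_nonneg _ _ h0]
      congr 2
      omega
    rw [hF, neg_one_zpow_sub]
    push_cast
    ring
  rw [Finset.sum_congr rfl term, ← Finset.mul_sum, ← Int.cast_sum,
    Int.alternating_sum_range_choose]
  rcases Nat.eq_zero_or_pos c with h | h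
  · subst h; norm_num
  · rw [if_neg (by omega), if_neg (by omega)]
    norm_num

noncomputable def Nc (a b c : ℕ) : ℚ :=
  ((2*a).factorial * (2*b).factorial : ℚ) /
    ((a+b).factorial * (a-c).factorial * (b-c).factorial * (2*c).factorial)

lemma fact_ne (n : ℕ) : ((n.factorial : ℚ)) ≠ 0 :=
  Nat.cast_ne_zero.mpr (Nat.factorial_ne_zero n)

lemma Nc_nonneg (a b c : ℕ) : 0 ≤ Nc a b c := by
  unfold Nc; positivity

lemma Nc_zero_pos (a b : ℕ) : 0 < Nc a b 0 := by
  unfold Nc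
  apply div_pos <;> positivity

-- Step C : Vandermonde
lemma vdm (a b n : ℕ) (ha : n ≤ a) (hb : n ≤ b) :
    ∑ c ∈ Icc n (min a b), (a+n).choose (c+n) * (b-n).choose (c-n)
      = (a+b).choose (a-n) := by
  rw [← Finset.Ico_add_one_right_eq_Icc, Finset.sum_Ico_eq_sum_range]
  have h1 : min a b + 1 - n = (min a b - n) + 1 := by omega
  rw [h1]
  have h2 : ∀ j ∈ range (min a b - n + 1),
      (a+n).choose (n + j + n) * (b-n).choose (n + j - n)
        = (a+n).choose ((a-n) - j) * (b-n).choose j := by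
    intro j hj
    simp only [mem_range] at hj
    have hj' : j ≤ min a b - n := by omega
    have : n + j - n = j := by omega
    rw [this]
    congr 1
    have h3 : n + j + n = (a + n) - ((a - n) - j) := by omega
    rw [h3, Nat.choose_symm (by omega)]
  rw [Finset.sum_congr rfl h2]
  -- extend range to (a-n)+1
  have h4 : ∑ j ∈ range (min a b - n + 1), (a+n).choose ((a-n) - j) * (b-n).choose j
      = ∑ j ∈ range ((a-n) + 1), (a+n).choose ((a-n) - j) * (b-n).choose j := by
    apply Finset.sum_subset
    · intro j hj; simp only [mem_range] at *; omega
    · intro j hj hj'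
      simp only [mem_range] at *
      have : b - n < j := by omega
      rw [Nat.choose_eq_zero_of_lt this, mul_zero]
  rw [h4]
  have h5 := Finset.sum_range_reflect
    (fun j => (a+n).choose ((a-n) - j) * (b-n).choose j) ((a-n)+1)
  simp only [Nat.add_sub_cancel] at h5
  rw [← h5]
  have h6 : ∀ j ∈ range ((a-n)+1),
      (a+n).choose ((a-n) - ((a-n) - j)) * (b-n).choose ((a-n) - j)
        = (a+n).choose j * (b-n).choose ((a-n) - j) := by
    intro j hj
    simp only [mem_range] at hj
    congr 2
    omega
  rw [Finset.sum_congr rfl h6]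
  have h7 : a + b = (a+n) + (b-n) := by omega
  rw [h7, Nat.add_choose_eq, Finset.Nat.sum_antidiagonal_eq_sum_range_succ_mk]


lemma term_eq (a b n c : ℕ) (ha : n ≤ a) (hb : n ≤ b) (hc1 : n ≤ c) (hc2 : c ≤ min a b) :
    Nc a b c * F c n
      = ((2*a).factorial * (2*b).factorial : ℚ) /
          ((a+b).factorial * (a+n).factorial * (b-n).factorial)
        * (((a+n).choose (c+n) * (b-n).choose (c-n) : ℕ) : ℚ) := by
  have hca : c ≤ a := by omega
  have hcb : c ≤ b := by omega
  rw [F_nat]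
  push_cast
  rw [Nat.cast_choose ℚ (by omega : c+n ≤ 2*c),
      Nat.cast_choose ℚ (by omega : c+n ≤ a+n),
      Nat.cast_choose ℚ (by omega : c-n ≤ b-n)]
  have e1 : 2*c - (c+n) = c - n := by omega
  have e2 : (a+n) - (c+n) = a - c := by omega
  have e3 : (b-n) - (c-n) = b - c := by omega
  rw [e1, e2, e3]
  unfold Nc
  field_simp

lemma linearize_nat (a b n : ℕ) (ha : n ≤ a) (hb : n ≤ b) :
    F a (n:ℤ) * F b (n:ℤ) = ∑ c ∈ range (min a b + 1), Nc a b c * F c (n:ℤ) := by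
  have hsub : ∑ c ∈ range (min a b + 1), Nc a b c * F c (n:ℤ)
      = ∑ c ∈ Icc n (min a b), Nc a b c * F c (n:ℤ) := by
    symm
    apply Finset.sum_subset
    · intro c hc; simp only [mem_Icc] at hc; simp only [mem_range]; omega
    · intro c hc hc'
      simp only [mem_range] at hc
      simp only [mem_Icc] at hc'
      have hcn : c < n := by omega
      rw [F_nat, Nat.choose_eq_zero_of_lt (by omega)]
      norm_num
  rw [hsub]
  rw [Finset.sum_congr rfl (fun c hc => term_eq a b n c ha hb
    (by simp only [mem_Icc] at hc; omega) (by simp only [mem_Icc] at hc; omega))]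
  rw [← Finset.mul_sum, ← Nat.cast_sum, vdm a b n ha hb]
  rw [F_nat, F_nat,
      Nat.cast_choose ℚ (by omega : a-n ≤ a+b),
      Nat.cast_choose ℚ (by omega : a+n ≤ 2*a),
      Nat.cast_choose ℚ (by omega : b+n ≤ 2*b)]
  have e1 : (a+b) - (a-n) = b + n := by omega
  have e2 : 2*a - (a+n) = a - n := by omega
  have e3 : 2*b - (b+n) = b - n := by omega
  rw [e1, e2, e3]
  field_simp

lemma F_abs (x : ℕ) (k : ℤ) : F x k = F x (k.natAbs : ℤ) := by
  rcases le_or_gt 0 k with h | h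
  · congr 1; omega
  · have : (k.natAbs : ℤ) = -k := by omega
    rw [this, F_neg]

lemma linearize (a b : ℕ) (k : ℤ) :
    F a k * F b k = ∑ c ∈ range (min a b + 1), Nc a b c * F c k := by
  rw [F_abs a k, F_abs b k, Finset.sum_congr rfl (fun c _ => by rw [F_abs c k])]
  by_cases h : k.natAbs ≤ min a b
  · exact linearize_nat a b k.natAbs (by omega) (by omega)
  · have habs : ∀ x : ℕ, x < k.natAbs → F x (k.natAbs : ℤ) = 0 := by
      intro x hx
      apply F_of_lt
      rw [abs_of_nonneg (by positivity)]
      exact_mod_cast hx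
    rw [Finset.sum_eq_zero (fun c hc => by
      simp only [mem_range] at hc
      rw [habs c (by omega), mul_zero])]
    rcases Nat.lt_or_ge a b with hab | hab
    · rw [habs a (by omega), zero_mul]
    · rw [habs b (by omega), mul_zero]
lemma ups_def {m : ℕ} (a : Fin (m + 1) → ℕ) :
    ups a = ∑ k ∈ Finset.Icc (-(a 0 : ℤ)) (a 0 : ℤ),
      (-1 : ℚ) ^ k * ∏ i, F (a i) k := rfl

lemma ups_ext {m : ℕ} (a : Fin (m + 1) → ℕ) (A : ℕ) (hA : a 0 ≤ A) :
    ups a = ∑ k ∈ Finset.Icc (-(A : ℤ)) (A : ℤ),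
      (-1 : ℚ) ^ k * ∏ i, F (a i) k := by
  rw [ups_def]
  apply Finset.sum_subset
  · apply Finset.Icc_subset_Icc <;> omega
  · intro k hk hk'
    simp only [mem_Icc] at hk hk'
    have h0 : F (a 0) k = 0 := F_of_lt (by rcases abs_cases k with ⟨h1,h2⟩|⟨h1,h2⟩ <;> omega)
    rw [Finset.prod_eq_zero (Finset.mem_univ (0 : Fin (m+1))) h0, mul_zero]

lemma ups_decomp {r : ℕ} (a : Fin (r + 2) → ℕ) :
    ups a = ∑ c ∈ range (min (a 0) (a 1) + 1),
      Nc (a 0) (a 1) c * ups (Fin.cons c (fun i => a i.succ.succ)) := by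
  have hprod : ∀ k : ℤ, ∏ i, F (a i) k
      = (F (a 0) k * F (a 1) k) * ∏ i : Fin r, F (a i.succ.succ) k := by
    intro k
    rw [Fin.prod_univ_succ, Fin.prod_univ_succ, mul_assoc, Fin.succ_zero_eq_one]
  have hups_c : ∀ c ∈ range (min (a 0) (a 1) + 1),
      ups (Fin.cons c (fun i => a i.succ.succ) : Fin (r+1) → ℕ)
        = ∑ k ∈ Icc (-(a 0 : ℤ)) (a 0 : ℤ),
            (-1:ℚ)^k * (F c k * ∏ i : Fin r, F (a i.succ.succ) k) := by
    intro c hc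
    simp only [mem_range] at hc
    rw [ups_ext _ (a 0) (by simp [Fin.cons_zero]; omega)]
    apply Finset.sum_congr rfl
    intro k _
    congr 1
    rw [Fin.prod_univ_succ]
    simp [Fin.cons_zero, Fin.cons_succ]
  rw [ups_def]
  have hterm : ∀ k ∈ Icc (-(a 0 : ℤ)) (a 0 : ℤ),
      (-1:ℚ)^k * ∏ i, F (a i) k
        = ∑ c ∈ range (min (a 0) (a 1) + 1),
            Nc (a 0) (a 1) c * ((-1:ℚ)^k * (F c k * ∏ i : Fin r, F (a i.succ.succ) k)) := by
    intro k _
    rw [hprod k, linearize, Finset.sum_mul, Finset.mul_sum]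
    apply Finset.sum_congr rfl
    intro c _
    ring
  rw [Finset.sum_congr rfl hterm, Finset.sum_comm]
  apply Finset.sum_congr rfl
  intro c hc
  rw [← Finset.mul_sum, hups_c c hc]

lemma ups_nonneg : ∀ (r : ℕ) (a : Fin (r + 1) → ℕ), 0 ≤ ups a := by
  intro r
  induction r with
  | zero =>
    intro a
    rw [ups_def]
    have : ∀ k ∈ Icc (-(a 0 : ℤ)) (a 0 : ℤ),
        (-1:ℚ)^k * ∏ i, F (a i) k = (-1:ℚ)^k * F (a 0) k := by
      intro k _
      rw [Fin.prod_univ_one]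
    rw [Finset.sum_congr rfl this, alt_row]
    split <;> norm_num
  | succ n ih =>
    intro a
    rw [ups_decomp a]
    apply Finset.sum_nonneg
    intro c _
    exact mul_nonneg (Nc_nonneg _ _ _) (ih _)

lemma ups_cons_zero_pos {r : ℕ} (v : Fin r → ℕ) :
    0 < ups (Fin.cons 0 v : Fin (r + 1) → ℕ) := by
  rw [ups_def]
  simp only [Fin.cons_zero, Nat.cast_zero, neg_zero, Finset.Icc_self, Finset.sum_singleton]
  rw [zpow_zero, one_mul]
  apply Finset.prod_pos
  intro i _
  have : F ((Fin.cons 0 v : Fin (r+1) → ℕ) i) 0 = (((2 * (Fin.cons 0 v : Fin (r+1) → ℕ) i)).choose ((Fin.cons 0 v : Fin (r+1) → ℕ) i + 0) : ℚ) := by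
    have := F_nat ((Fin.cons 0 v : Fin (r+1) → ℕ) i) 0
    simpa using this
  rw [this]
  have := Nat.choose_pos (n := 2 * (Fin.cons 0 v : Fin (r+1) → ℕ) i)
    (k := (Fin.cons 0 v : Fin (r+1) → ℕ) i + 0) (by omega)
  exact_mod_cast this

/-- For every `m ≥ 2` (here the arity is `m + 2`) and all nonnegative integers
`a₀, …, a_{m+1}`, one has `Υ_{m+2}(a₀, …, a_{m+1}) > 0`. -/
theorem stmt5 (m : ℕ) (a : Fin (m + 2) → ℕ) : 0 < ups a := by
  rw [ups_decomp a]
  have h0 : (0 : ℕ) ∈ range (min (a 0) (a 1) + 1) := by simp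
  apply lt_of_lt_of_le (b := Nc (a 0) (a 1) 0 * ups (Fin.cons 0 (fun i => a i.succ.succ)))
  · exact mul_pos (Nc_zero_pos _ _) (ups_cons_zero_pos _)
  · apply Finset.single_le_sum (f := fun c => Nc (a 0) (a 1) c * ups (Fin.cons c (fun i => a i.succ.succ))) _ h0
    intro c _
    exact mul_nonneg (Nc_nonneg _ _ _) (ups_nonneg _ _)
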